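/- If G_1 and G_2 are weakly (Q_{n−1}, Q_2)-saturated spanning trees of Q_{n−1}, then the graph formed by placing G_1 and G_2 in the two complementary copies of Q_{n−1} inside Q_n and adding a single edge between one pair of corresponding vertices is a weakly (Q_n, Q_2)-saturated spanning tree of Q_n. -/

import Mathlib

/-- The hypercube graph `Q_n` on vertex set `{0,1}^n`. -/
def Qc (n : ℕ) : SimpleGraph (Fin n → ZMod 2) :=
  SimpleGraph.fromRel (fun x y => hammingDist x y = 1)

/-- `f` is an (injective, edge-preserving) copy of the cube `Q_m` in the graph `G`. -/
def IsCubeCopy (m : ℕ) {V : Type*} (G : SimpleGraph V) (f : (Fin m → ZMod 2) → V) : Prop :=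
  Function.Injective f ∧ ∀ x y, (Qc m).Adj x y → G.Adj (f x) (f y)

/-- `G` contains a copy of the cube `Q_m`. -/
def ContainsCube (m : ℕ) {V : Type*} (G : SimpleGraph V) : Prop :=
  ∃ f, IsCubeCopy m G f

/-- `G` is `Q_m`-free. -/
def CubeFree (m : ℕ) {V : Type*} (G : SimpleGraph V) : Prop :=
  ¬ ContainsCube m G

/-- Adding the edge `e` to `G` creates a new copy of `Q_m`. -/
def NewCube (m : ℕ) {V : Type*} (G : SimpleGraph V) (e : Sym2 V) : Prop :=
  ∃ f, IsCubeCopy m (G ⊔ SimpleGraph.fromEdgeSet {e}) f ∧ ¬ IsCubeCopy m G f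

/-- `G` is `(Q_n, Q_m)`-semi-saturated. -/
def SemiSaturated (n m : ℕ) (G : SimpleGraph (Fin n → ZMod 2)) : Prop :=
  G ≤ Qc n ∧ ∀ e ∈ (Qc n).edgeSet, e ∉ G.edgeSet → NewCube m G e

/-- `G` is `(Q_n, Q_m)`-saturated. -/
def Saturated (n m : ℕ) (G : SimpleGraph (Fin n → ZMod 2)) : Prop :=
  G ≤ Qc n ∧ CubeFree m G ∧
    ∀ e ∈ (Qc n).edgeSet, e ∉ G.edgeSet → ContainsCube m (G ⊔ SimpleGraph.fromEdgeSet {e})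
/-- `G` is weakly `(Q_n, Q_m)`-saturated. -/
def WeaklySaturated (n m : ℕ) (G : SimpleGraph (Fin n → ZMod 2)) : Prop :=
  G ≤ Qc n ∧ ∃ l : List (Sym2 (Fin n → ZMod 2)),
    l.Nodup ∧ (∀ e ∈ l, e ∈ (Qc n).edgeSet \ G.edgeSet) ∧
    (Qc n).edgeSet ⊆ G.edgeSet ∪ {e | e ∈ l} ∧
    ∀ i : Fin l.length,
      NewCube m (G ⊔ SimpleGraph.fromEdgeSet {e | e ∈ l.take i.1}) (l.get i)

/-- The graph on `Q_{n+1}` obtained by placing `G₁` in the bottom copy of `Q_n` (last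
coordinate `0`), `G₂` in the top copy (last coordinate `1`), and adding the single
matching edge at the vertex `v₀`. -/
def glue (n : ℕ) (G₁ G₂ : SimpleGraph (Fin n → ZMod 2)) (v₀ : Fin n → ZMod 2) :
    SimpleGraph (Fin (n + 1) → ZMod 2) :=
  SimpleGraph.fromRel (fun x y =>
    (x (Fin.last n) = y (Fin.last n) ∧
      ((x (Fin.last n) = 0 ∧ G₁.Adj (x ∘ Fin.castSucc) (y ∘ Fin.castSucc)) ∨
       (x (Fin.last n) = 1 ∧ G₂.Adj (x ∘ Fin.castSucc) (y ∘ Fin.castSucc)))) ∨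
    (x ∘ Fin.castSucc = v₀ ∧ y ∘ Fin.castSucc = v₀ ∧ x (Fin.last n) ≠ y (Fin.last n)))
open Fin Function SimpleGraph

section Basics
variable {n : ℕ} {G₁ G₂ : SimpleGraph (Fin n → ZMod 2)} {v₀ : Fin n → ZMod 2}

lemma zmod2_cases (c : ZMod 2) : c = 0 ∨ c = 1 := by revert c; decide

lemma zmod01 : (0 : ZMod 2) ≠ 1 := by decide

lemma snoc_inj {c : ZMod 2} :
    Function.Injective (fun x : Fin n → ZMod 2 => (Fin.snoc x c : Fin (n+1) → ZMod 2)) := by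
  intro a b h
  have := congrArg (· ∘ Fin.castSucc) h
  simpa [Fin.snoc_comp_castSucc] using this

lemma snoc_reconstruct (x : Fin (n+1) → ZMod 2) :
    (Fin.snoc (x ∘ Fin.castSucc) (x (Fin.last n)) : Fin (n+1) → ZMod 2) = x := by
  funext i
  induction i using Fin.lastCases with
  | last => simp
  | cast i => simp

lemma hd_snoc (a b : Fin n → ZMod 2) (c d : ZMod 2) :
    hammingDist (Fin.snoc a c : Fin (n+1) → ZMod 2) (Fin.snoc b d)
      = hammingDist a b + if c = d then 0 else 1 := by
  classical
  simp only [hammingDist, Finset.card_filter]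
  rw [Fin.sum_univ_castSucc]
  simp [Fin.snoc_castSucc, Fin.snoc_last, eq_comm, ite_not]

lemma Qc_adj {x y : Fin n → ZMod 2} : (Qc n).Adj x y ↔ hammingDist x y = 1 := by
  constructor
  · rintro ⟨hne, h | h⟩
    · exact h
    · rwa [hammingDist_comm]
  · intro h
    refine ⟨fun he => by simp [he] at h, Or.inl h⟩

/-- Characterization of adjacency in `glue`. -/
lemma glue_adj {x y : Fin (n+1) → ZMod 2} :
    (glue n G₁ G₂ v₀).Adj x y ↔
      (x (Fin.last n) = y (Fin.last n) ∧
        ((x (Fin.last n) = 0 ∧ G₁.Adj (x ∘ Fin.castSucc) (y ∘ Fin.castSucc)) ∨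
         (x (Fin.last n) = 1 ∧ G₂.Adj (x ∘ Fin.castSucc) (y ∘ Fin.castSucc)))) ∨
      (x ∘ Fin.castSucc = v₀ ∧ y ∘ Fin.castSucc = v₀ ∧ x (Fin.last n) ≠ y (Fin.last n)) := by
  constructor
  · rintro ⟨hne, h | h⟩
    · exact h
    · rcases h with ⟨he, h | h⟩ | ⟨ha, hb, hne'⟩
      · exact Or.inl ⟨he.symm, Or.inl ⟨he ▸ h.1, h.2.symm⟩⟩
      · exact Or.inl ⟨he.symm, Or.inr ⟨he ▸ h.1, h.2.symm⟩⟩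
      · exact Or.inr ⟨hb, ha, hne'.symm⟩
  · intro h
    refine ⟨?_, Or.inl h⟩
    rcases h with ⟨_, ⟨_, ha⟩ | ⟨_, ha⟩⟩ | ⟨_, _, hne⟩
    · exact fun he => ha.ne (by rw [he])
    · exact fun he => ha.ne (by rw [he])
    · exact fun he => hne (by rw [he])

lemma glue_adj_00 {a b : Fin n → ZMod 2} :
    (glue n G₁ G₂ v₀).Adj (Fin.snoc a 0) (Fin.snoc b 0) ↔ G₁.Adj a b := by
  rw [glue_adj]
  simp [Fin.snoc_last, Fin.snoc_comp_castSucc, zmod01, (zmod01).symm]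

lemma glue_adj_11 {a b : Fin n → ZMod 2} :
    (glue n G₁ G₂ v₀).Adj (Fin.snoc a 1) (Fin.snoc b 1) ↔ G₂.Adj a b := by
  rw [glue_adj]
  simp [Fin.snoc_last, Fin.snoc_comp_castSucc, zmod01, (zmod01).symm]

lemma glue_adj_01 {a b : Fin n → ZMod 2} :
    (glue n G₁ G₂ v₀).Adj (Fin.snoc a 0) (Fin.snoc b 1) ↔ a = v₀ ∧ b = v₀ := by
  rw [glue_adj]
  simp [Fin.snoc_last, Fin.snoc_comp_castSucc, zmod01, (zmod01).symm]

end Basics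
section Lifts
variable {n : ℕ} {G₁ G₂ : SimpleGraph (Fin n → ZMod 2)} {v₀ : Fin n → ZMod 2}

/-- Lift of an edge into the bottom copy. -/
noncomputable def m0 (n : ℕ) : Sym2 (Fin n → ZMod 2) → Sym2 (Fin (n+1) → ZMod 2) :=
  Sym2.map (fun x => (Fin.snoc x 0 : Fin (n+1) → ZMod 2))

/-- Lift of an edge into the top copy. -/
noncomputable def m1 (n : ℕ) : Sym2 (Fin n → ZMod 2) → Sym2 (Fin (n+1) → ZMod 2) :=
  Sym2.map (fun x => (Fin.snoc x 1 : Fin (n+1) → ZMod 2))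

/-- The matching edge over a vertex. -/
noncomputable def me (n : ℕ) (u : Fin n → ZMod 2) : Sym2 (Fin (n+1) → ZMod 2) :=
  s((Fin.snoc u 0 : Fin (n+1) → ZMod 2), (Fin.snoc u 1 : Fin (n+1) → ZMod 2))

lemma m0_inj : Function.Injective (m0 n) := Sym2.map.injective snoc_inj
lemma m1_inj : Function.Injective (m1 n) := Sym2.map.injective snoc_inj
lemma me_inj : Function.Injective (me n) := by
  intro a b h
  rw [me, me, Sym2.eq_iff] at h
  rcases h with ⟨h, _⟩ | ⟨h, _⟩ <;>
    [skip; exact absurd (congrFun h (Fin.last n)) (by simp [Fin.snoc_last])]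
  exact snoc_inj h

lemma m0_mk (a b : Fin n → ZMod 2) :
    m0 n s(a, b) = s((Fin.snoc a 0 : Fin (n+1) → ZMod 2), Fin.snoc b 0) := Sym2.map_pair_eq _ _ _
lemma m1_mk (a b : Fin n → ZMod 2) :
    m1 n s(a, b) = s((Fin.snoc a 1 : Fin (n+1) → ZMod 2), Fin.snoc b 1) := Sym2.map_pair_eq _ _ _

/-- Every point of an edge in the image of `m0` ends in `0`. -/
lemma mem_m0_last {S : Set (Sym2 (Fin n → ZMod 2))} {x : Fin (n+1) → ZMod 2}
    {E : Sym2 (Fin (n+1) → ZMod 2)} (hE : E ∈ m0 n '' S) (hx : x ∈ E) : x (Fin.last n) = 0 := by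
  obtain ⟨e, _, rfl⟩ := hE
  induction e with
  | h a b =>
    rw [m0_mk, Sym2.mem_iff] at hx
    rcases hx with rfl | rfl <;> simp [Fin.snoc_last]

lemma mem_m1_last {S : Set (Sym2 (Fin n → ZMod 2))} {x : Fin (n+1) → ZMod 2}
    {E : Sym2 (Fin (n+1) → ZMod 2)} (hE : E ∈ m1 n '' S) (hx : x ∈ E) : x (Fin.last n) = 1 := by
  obtain ⟨e, _, rfl⟩ := hE
  induction e with
  | h a b =>
    rw [m1_mk, Sym2.mem_iff] at hx
    rcases hx with rfl | rfl <;> simp [Fin.snoc_last]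

lemma mem00_iff {S T : Set (Sym2 (Fin n → ZMod 2))} {W : Set (Fin n → ZMod 2)}
    {a b : Fin n → ZMod 2} :
    s((Fin.snoc a 0 : Fin (n+1) → ZMod 2), Fin.snoc b 0) ∈ (m0 n '' S ∪ m1 n '' T ∪ me n '' W)
      ↔ s(a, b) ∈ S := by
  constructor
  · rintro ((h | h) | h)
    · obtain ⟨e, he, heq⟩ := h
      rw [← m0_mk, m0_inj.eq_iff] at heq
      rwa [heq] at he
    · exact absurd (mem_m1_last h (Sym2.mem_mk_left _ _)) (by simp [Fin.snoc_last])
    · obtain ⟨u, _, heq⟩ := h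
      rw [me, Sym2.eq_iff] at heq
      rcases heq with ⟨_, h2⟩ | ⟨_, h2⟩ <;>
        exact absurd (congrFun h2 (Fin.last n)) (by simp [Fin.snoc_last])
  · intro h
    exact Or.inl (Or.inl ⟨s(a, b), h, (m0_mk a b)⟩)

lemma mem11_iff {S T : Set (Sym2 (Fin n → ZMod 2))} {W : Set (Fin n → ZMod 2)}
    {a b : Fin n → ZMod 2} :
    s((Fin.snoc a 1 : Fin (n+1) → ZMod 2), Fin.snoc b 1) ∈ (m0 n '' S ∪ m1 n '' T ∪ me n '' W)
      ↔ s(a, b) ∈ T := by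
  constructor
  · rintro ((h | h) | h)
    · exact absurd (mem_m0_last h (Sym2.mem_mk_left _ _)) (by simp [Fin.snoc_last])
    · obtain ⟨e, he, heq⟩ := h
      rw [← m1_mk, m1_inj.eq_iff] at heq
      rwa [heq] at he
    · obtain ⟨u, _, heq⟩ := h
      rw [me, Sym2.eq_iff] at heq
      rcases heq with ⟨h2, _⟩ | ⟨h2, _⟩ <;>
        exact absurd (congrFun h2 (Fin.last n)).symm (by simp [Fin.snoc_last])
  · intro h
    exact Or.inl (Or.inr ⟨s(a, b), h, (m1_mk a b)⟩)

lemma mem01_iff {S T : Set (Sym2 (Fin n → ZMod 2))} {W : Set (Fin n → ZMod 2)}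
    {a b : Fin n → ZMod 2} :
    s((Fin.snoc a 0 : Fin (n+1) → ZMod 2), Fin.snoc b 1) ∈ (m0 n '' S ∪ m1 n '' T ∪ me n '' W)
      ↔ (a = b ∧ a ∈ W) := by
  constructor
  · rintro ((h | h) | h)
    · exact absurd (mem_m0_last h (Sym2.mem_mk_right _ _)) (by simp [Fin.snoc_last])
    · exact absurd (mem_m1_last h (Sym2.mem_mk_left _ _)) (by simp [Fin.snoc_last])
    · obtain ⟨u, hu, heq⟩ := h
      rw [me, Sym2.eq_iff] at heq
      rcases heq with ⟨h1, h2⟩ | ⟨h1, h2⟩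
      · obtain rfl := snoc_inj h1
        obtain rfl := snoc_inj h2
        exact ⟨rfl, hu⟩
      · exact absurd (congrFun h1 (Fin.last n)) (by simp [Fin.snoc_last])
  · rintro ⟨rfl, hW⟩
    exact Or.inr ⟨a, hW, rfl⟩

lemma snoc01_ne {a b : Fin n → ZMod 2} :
    (Fin.snoc a 0 : Fin (n+1) → ZMod 2) ≠ Fin.snoc b 1 := by
  intro h
  exact zmod01 (by simpa [Fin.snoc_last] using congrFun h (Fin.last n))

/-- Bottom-copy adjacency in the augmented glue graph. -/
lemma adj00 {S T : Set (Sym2 (Fin n → ZMod 2))} {W : Set (Fin n → ZMod 2)}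
    {a b : Fin n → ZMod 2} :
    (glue n G₁ G₂ v₀ ⊔ SimpleGraph.fromEdgeSet (m0 n '' S ∪ m1 n '' T ∪ me n '' W)).Adj
      (Fin.snoc a 0) (Fin.snoc b 0) ↔ (G₁ ⊔ SimpleGraph.fromEdgeSet S).Adj a b := by
  simp only [SimpleGraph.sup_adj, SimpleGraph.fromEdgeSet_adj, glue_adj_00, mem00_iff,
    snoc_inj.ne_iff]

lemma adj11 {S T : Set (Sym2 (Fin n → ZMod 2))} {W : Set (Fin n → ZMod 2)}
    {a b : Fin n → ZMod 2} :
    (glue n G₁ G₂ v₀ ⊔ SimpleGraph.fromEdgeSet (m0 n '' S ∪ m1 n '' T ∪ me n '' W)).Adj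
      (Fin.snoc a 1) (Fin.snoc b 1) ↔ (G₂ ⊔ SimpleGraph.fromEdgeSet T).Adj a b := by
  simp only [SimpleGraph.sup_adj, SimpleGraph.fromEdgeSet_adj, glue_adj_11, mem11_iff,
    snoc_inj.ne_iff]

lemma adj01 {S T : Set (Sym2 (Fin n → ZMod 2))} {W : Set (Fin n → ZMod 2)}
    {a b : Fin n → ZMod 2} :
    (glue n G₁ G₂ v₀ ⊔ SimpleGraph.fromEdgeSet (m0 n '' S ∪ m1 n '' T ∪ me n '' W)).Adj
      (Fin.snoc a 0) (Fin.snoc b 1) ↔ ((a = v₀ ∧ b = v₀) ∨ (a = b ∧ a ∈ W)) := by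
  simp only [SimpleGraph.sup_adj, SimpleGraph.fromEdgeSet_adj, glue_adj_01, mem01_iff]
  exact ⟨fun h => h.imp id And.left, fun h => h.imp id (fun h => ⟨h, snoc01_ne⟩)⟩

end Lifts
section Transfer
variable {n : ℕ} {G₁ G₂ : SimpleGraph (Fin n → ZMod 2)} {v₀ : Fin n → ZMod 2}

lemma hd_split (x y : Fin (n+1) → ZMod 2) :
    hammingDist x y = hammingDist (x ∘ Fin.castSucc) (y ∘ Fin.castSucc)
      + if x (Fin.last n) = y (Fin.last n) then 0 else 1 := by
  conv_lhs => rw [← snoc_reconstruct x, ← snoc_reconstruct y]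
  rw [hd_snoc]

lemma glue_le (hG₁ : G₁ ≤ Qc n) (hG₂ : G₂ ≤ Qc n) : glue n G₁ G₂ v₀ ≤ Qc (n+1) := by
  intro x y h
  rw [glue_adj] at h
  rw [Qc_adj, hd_split]
  rcases h with ⟨hl, ⟨_, ha⟩ | ⟨_, ha⟩⟩ | ⟨hx, hy, hne⟩
  · rw [if_pos hl, Qc_adj.mp (hG₁ ha)]
  · rw [if_pos hl, Qc_adj.mp (hG₂ ha)]
  · rw [if_neg hne, hx, hy, hammingDist_self]

lemma isCubeCopy_comp {m : ℕ} {V W : Type*} {H : SimpleGraph V} {H' : SimpleGraph W}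
    {g : V → W} (hg : Function.Injective g)
    (hadj : ∀ a b, H.Adj a b ↔ H'.Adj (g a) (g b)) (f : (Fin m → ZMod 2) → V) :
    IsCubeCopy m H f ↔ IsCubeCopy m H' (g ∘ f) := by
  constructor
  · rintro ⟨hf, he⟩
    exact ⟨hg.comp hf, fun x y h => (hadj _ _).1 (he x y h)⟩
  · rintro ⟨hf, he⟩
    exact ⟨hf.of_comp, fun x y h => (hadj _ _).2 (he x y h)⟩

lemma sup_fromEdgeSet_sup {V : Type*} (G : SimpleGraph V) (A B : Set (Sym2 V)) :
    G ⊔ SimpleGraph.fromEdgeSet A ⊔ SimpleGraph.fromEdgeSet B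
      = G ⊔ SimpleGraph.fromEdgeSet (A ∪ B) := by
  rw [SimpleGraph.fromEdgeSet_union, sup_assoc]

lemma newCube0 {S T : Set (Sym2 (Fin n → ZMod 2))} {W : Set (Fin n → ZMod 2)}
    {e : Sym2 (Fin n → ZMod 2)}
    (h : NewCube 2 (G₁ ⊔ SimpleGraph.fromEdgeSet S) e) :
    NewCube 2 (glue n G₁ G₂ v₀ ⊔
      SimpleGraph.fromEdgeSet (m0 n '' S ∪ m1 n '' T ∪ me n '' W)) (m0 n e) := by
  obtain ⟨f, hf1, hf0⟩ := h
  have hrw : glue n G₁ G₂ v₀ ⊔ SimpleGraph.fromEdgeSet (m0 n '' S ∪ m1 n '' T ∪ me n '' W)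
      ⊔ SimpleGraph.fromEdgeSet {m0 n e}
      = glue n G₁ G₂ v₀ ⊔
        SimpleGraph.fromEdgeSet (m0 n '' (S ∪ {e}) ∪ m1 n '' T ∪ me n '' W) := by
    rw [sup_fromEdgeSet_sup]
    congr 1
    apply congrArg
    rw [Set.image_union, Set.image_singleton]
    ext E; simp only [Set.mem_union, Set.mem_singleton_iff]; tauto
  refine ⟨(fun x => (Fin.snoc x 0 : Fin (n+1) → ZMod 2)) ∘ f, ?_, ?_⟩
  · rw [hrw, ← isCubeCopy_comp snoc_inj (fun a b => ?_) f]
    · rwa [sup_fromEdgeSet_sup] at hf1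
    · exact (adj00 (S := S ∪ {e}) (T := T) (W := W)).symm
  · rw [← isCubeCopy_comp snoc_inj (fun a b => adj00.symm) f]
    exact hf0

lemma newCube1 {S T : Set (Sym2 (Fin n → ZMod 2))} {W : Set (Fin n → ZMod 2)}
    {e : Sym2 (Fin n → ZMod 2)}
    (h : NewCube 2 (G₂ ⊔ SimpleGraph.fromEdgeSet T) e) :
    NewCube 2 (glue n G₁ G₂ v₀ ⊔
      SimpleGraph.fromEdgeSet (m0 n '' S ∪ m1 n '' T ∪ me n '' W)) (m1 n e) := by
  obtain ⟨f, hf1, hf0⟩ := h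
  have hrw : glue n G₁ G₂ v₀ ⊔ SimpleGraph.fromEdgeSet (m0 n '' S ∪ m1 n '' T ∪ me n '' W)
      ⊔ SimpleGraph.fromEdgeSet {m1 n e}
      = glue n G₁ G₂ v₀ ⊔
        SimpleGraph.fromEdgeSet (m0 n '' S ∪ m1 n '' (T ∪ {e}) ∪ me n '' W) := by
    rw [sup_fromEdgeSet_sup]
    congr 1
    apply congrArg
    rw [Set.image_union, Set.image_singleton]
    ext E; simp only [Set.mem_union, Set.mem_singleton_iff]; tauto
  refine ⟨(fun x => (Fin.snoc x 1 : Fin (n+1) → ZMod 2)) ∘ f, ?_, ?_⟩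
  · rw [hrw, ← isCubeCopy_comp snoc_inj (fun a b => ?_) f]
    · rwa [sup_fromEdgeSet_sup] at hf1
    · exact (adj11 (S := S) (T := T ∪ {e}) (W := W)).symm
  · rw [← isCubeCopy_comp snoc_inj (fun a b => adj11.symm) f]
    exact hf0

end Transfer
section Match
variable {n : ℕ} {G₁ G₂ : SimpleGraph (Fin n → ZMod 2)} {v₀ : Fin n → ZMod 2}

lemma q2_adj_cases {x y : Fin 2 → ZMod 2} (h : (Qc 2).Adj x y) :
    (x 0 = y 0 ∧ x 1 ≠ y 1) ∨ (x 0 ≠ y 0 ∧ x 1 = y 1) := by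
  classical
  rw [Qc_adj] at h
  have hh : hammingDist x y = (if x 0 ≠ y 0 then 1 else 0) + (if x 1 ≠ y 1 then 1 else 0) := by
    simp only [hammingDist, Finset.card_filter, Fin.sum_univ_two]
  by_cases h0 : x 0 = y 0 <;> by_cases h1 : x 1 = y 1
  · exfalso; rw [hh] at h; simp [h0, h1] at h
  · exact Or.inl ⟨h0, h1⟩
  · exact Or.inr ⟨h0, h1⟩
  · exfalso; rw [hh] at h; simp [h0, h1] at h

lemma newCubeMatch {S T : Set (Sym2 (Fin n → ZMod 2))} {W : Set (Fin n → ZMod 2)}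
    {u w : Fin n → ZMod 2}
    (hbot : Qc n ≤ G₁ ⊔ SimpleGraph.fromEdgeSet S)
    (htop : Qc n ≤ G₂ ⊔ SimpleGraph.fromEdgeSet T)
    (huw : (Qc n).Adj u w)
    (hw : (w = v₀ ∧ w = v₀) ∨ (w = w ∧ w ∈ W))
    (hu : u ≠ v₀) (huW : u ∉ W) :
    NewCube 2 (glue n G₁ G₂ v₀ ⊔
      SimpleGraph.fromEdgeSet (m0 n '' S ∪ m1 n '' T ∪ me n '' W)) (me n u) := by
  classical
  set big := glue n G₁ G₂ v₀ ⊔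
      SimpleGraph.fromEdgeSet (m0 n '' S ∪ m1 n '' T ∪ me n '' W) with hbig
  set f : (Fin 2 → ZMod 2) → (Fin (n+1) → ZMod 2) :=
    fun x => Fin.snoc (if x 1 = 0 then u else w) (x 0) with hf
  have huw' : u ≠ w := huw.ne
  have hinj : Function.Injective f := by
    intro x y hxy
    have h0 : x 0 = y 0 := by
      have := congrFun hxy (Fin.last n)
      simpa [hf, Fin.snoc_last] using this
    have h1 : (if x 1 = 0 then u else w) = (if y 1 = 0 then u else w) := by
      have := congrArg (· ∘ Fin.castSucc) hxy
      simpa [hf, Fin.snoc_comp_castSucc] using this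
    have h1' : x 1 = y 1 := by
      by_cases hx1 : x 1 = 0 <;> by_cases hy1 : y 1 = 0
      · rw [hx1, hy1]
      · simp [hx1, hy1] at h1; exact absurd h1 huw'
      · simp [hx1, hy1] at h1; exact absurd h1.symm huw'
      · rcases zmod2_cases (x 1) with h | h; exact absurd h hx1
        rcases zmod2_cases (y 1) with h' | h'; exact absurd h' hy1
        rw [h, h']
    funext i; fin_cases i <;> assumption
  have hcopy1 : ∀ x y, (Qc 2).Adj x y →
      (big ⊔ SimpleGraph.fromEdgeSet {me n u}).Adj (f x) (f y) := by
    intro x y hxy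
    rcases q2_adj_cases hxy with ⟨h0, h1⟩ | ⟨h0, h1⟩
    · -- edge between the two copies of {u,w} at the same level
      have hadjP : (Qc n).Adj (if x 1 = 0 then u else w) (if y 1 = 0 then u else w) := by
        by_cases hx1 : x 1 = 0 <;> by_cases hy1 : y 1 = 0
        · exact absurd (hx1.trans hy1.symm) h1
        · simpa [hx1, hy1] using huw
        · simpa [hx1, hy1] using huw.symm
        · exfalso
          rcases zmod2_cases (x 1) with h | h; exact absurd h hx1
          rcases zmod2_cases (y 1) with h' | h'; exact absurd h' hy1
          exact h1 (h.trans h'.symm)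
      have hfx : f x = Fin.snoc (if x 1 = 0 then u else w) (x 0) := rfl
      have hfy : f y = Fin.snoc (if y 1 = 0 then u else w) (x 0) := by
        rw [hf]; simp only; rw [h0]
      rw [SimpleGraph.sup_adj]; left
      rcases zmod2_cases (x 0) with hc | hc
      · rw [hfx, hfy, hc, hbig]
        exact adj00.mpr (hbot hadjP)
      · rw [hfx, hfy, hc, hbig]
        exact adj11.mpr (htop hadjP)
    · -- matching-direction edge
      have hPP : (if x 1 = 0 then u else w) = (if y 1 = 0 then u else w) := by rw [h1]
      set p := (if y 1 = 0 then u else w) with hp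
      have hfx : f x = Fin.snoc p (x 0) := by rw [hf]; simp only; rw [hPP]
      have hfy : f y = Fin.snoc p (y 0) := rfl
      have hmain : ∀ c d : ZMod 2, c = 0 → d = 1 →
          (big ⊔ SimpleGraph.fromEdgeSet {me n u}).Adj (Fin.snoc p c) (Fin.snoc p d) := by
        intro c d hc hd
        subst hc; subst hd
        by_cases hpu : p = u
        · rw [SimpleGraph.sup_adj]; right
          rw [SimpleGraph.fromEdgeSet_adj]
          exact ⟨by rw [hpu]; exact Set.mem_singleton _, snoc01_ne⟩
        · have hpw : p = w := by
            by_cases hy1 : y 1 = 0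
            · exact absurd (by rw [hp, if_pos hy1]) hpu
            · rw [hp, if_neg hy1]
          rw [SimpleGraph.sup_adj]; left
          rw [hbig]
          exact adj01.mpr (by rw [hpw]; exact hw)
      rcases zmod2_cases (x 0) with hc | hc <;> rcases zmod2_cases (y 0) with hd | hd
      · exact absurd (hc.trans hd.symm) h0
      · rw [hfx, hfy]; exact hmain _ _ hc hd
      · rw [hfx, hfy]; exact (hmain _ _ hd hc).symm
      · exact absurd (hc.trans hd.symm) h0
  have hnot : ¬ IsCubeCopy 2 big f := by
    rintro ⟨-, hcopy⟩
    have hadj : (Qc 2).Adj (fun _ => 0) (fun i => if i = 0 then 1 else 0) := by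
      rw [Qc_adj]; decide
    have hcon := hcopy _ _ hadj
    have hx : f (fun _ => 0) = Fin.snoc u 0 := by rw [hf]; simp
    have hy : f (fun i => if i = 0 then 1 else 0) = Fin.snoc u 1 := by
      rw [hf]; norm_num
    rw [hx, hy, hbig] at hcon
    rcases adj01.mp hcon with ⟨h, -⟩ | ⟨-, h⟩
    · exact hu h
    · exact huW h
  exact ⟨f, ⟨hinj, hcopy1⟩, hnot⟩

end Match
section Tree
variable {n : ℕ} {G₁ G₂ : SimpleGraph (Fin n → ZMod 2)} {v₀ : Fin n → ZMod 2}

lemma glue_connected (h1 : G₁.Connected) (h2 : G₂.Connected) :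
    (glue n G₁ G₂ v₀).Connected := by
  have hstep : (glue n G₁ G₂ v₀).Adj (Fin.snoc v₀ 0) (Fin.snoc v₀ 1) :=
    glue_adj_01.mpr ⟨rfl, rfl⟩
  have hreach : ∀ x, (glue n G₁ G₂ v₀).Reachable x (Fin.snoc v₀ 0) := by
    intro x
    rcases zmod2_cases (x (Fin.last n)) with hc | hc
    · have hx : x = Fin.snoc (x ∘ Fin.castSucc) 0 := by rw [← hc, snoc_reconstruct]
      rw [hx]
      exact (h1.preconnected (x ∘ Fin.castSucc) v₀).map ⟨fun a => (Fin.snoc a 0 : Fin (n+1) → ZMod 2), fun h => glue_adj_00.mpr h⟩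
    · have hx : x = Fin.snoc (x ∘ Fin.castSucc) 1 := by rw [← hc, snoc_reconstruct]
      rw [hx]
      exact ((h2.preconnected (x ∘ Fin.castSucc) v₀).map ⟨fun a => (Fin.snoc a 1 : Fin (n+1) → ZMod 2), fun h => glue_adj_11.mpr h⟩).trans hstep.symm.reachable
  exact ⟨fun x y => (hreach x).trans (hreach y).symm⟩

lemma step_case {x y : Fin (n+1) → ZMod 2} (h : (glue n G₁ G₂ v₀).Adj x y) :
    (s(x, y) = me n v₀ ∧ y (Fin.last n) = x (Fin.last n) + 1) ∨
    (s(x, y) ≠ me n v₀ ∧ y (Fin.last n) = x (Fin.last n)) := by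
  rcases glue_adj.mp h with ⟨hl, -⟩ | ⟨hx, hy, hne⟩
  · right
    refine ⟨?_, hl.symm⟩
    intro he
    rw [me, Sym2.eq_iff] at he
    rcases he with ⟨h1', h2'⟩ | ⟨h1', h2'⟩ <;>
    · rw [h1', h2'] at hl
      simp [Fin.snoc_last] at hl
  · left
    have hx' : x = Fin.snoc v₀ (x (Fin.last n)) := by rw [← hx, snoc_reconstruct]
    have hy' : y = Fin.snoc v₀ (y (Fin.last n)) := by rw [← hy, snoc_reconstruct]
    rcases zmod2_cases (x (Fin.last n)) with h0 | h0 <;>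
      rcases zmod2_cases (y (Fin.last n)) with h0' | h0'
    · exact absurd (h0.trans h0'.symm) hne
    · constructor
      · rw [me]
        conv_lhs => rw [hx', hy', h0, h0']
      · rw [h0, h0']; decide
    · constructor
      · rw [me]
        conv_lhs => rw [hx', hy', h0, h0']
        exact Sym2.eq_swap
      · rw [h0, h0']; decide
    · exact absurd (h0.trans h0'.symm) hne

lemma walk_parity {x y : Fin (n+1) → ZMod 2} (pw : (glue n G₁ G₂ v₀).Walk x y) :
    y (Fin.last n) = x (Fin.last n) + (pw.edges.count (me n v₀) : ZMod 2) := by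
  classical
  induction pw with
  | nil => simp
  | @cons a b c h q ih =>
    rw [SimpleGraph.Walk.edges_cons, List.count_cons]
    rcases step_case h with ⟨he, hl⟩ | ⟨he, hl⟩
    · rw [if_pos (by exact beq_iff_eq.mpr he)]
      rw [ih, hl]
      push_cast
      ring
    · rw [if_neg (by simpa using he)]
      rw [ih, hl]
      push_cast
      ring

/-- Projection of a walk avoiding the matching edge, living in the bottom copy. -/
lemma proj_walk0 {x y : Fin (n+1) → ZMod 2} (pw : (glue n G₁ G₂ v₀).Walk x y)
    (hem : me n v₀ ∉ pw.edges) (hx : x (Fin.last n) = 0) :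
    ∃ q : G₁.Walk (x ∘ Fin.castSucc) (y ∘ Fin.castSucc),
      q.support = pw.support.map (· ∘ Fin.castSucc) ∧
      q.edges = pw.edges.map (Sym2.map (· ∘ Fin.castSucc)) ∧
      ∀ z ∈ pw.support, z (Fin.last n) = 0 := by
  induction pw with
  | nil =>
    exact ⟨SimpleGraph.Walk.nil, by simp, by simp, by simpa using hx⟩
  | @cons a b c h q ih =>
    have hb : b (Fin.last n) = 0 := by
      rcases step_case h with ⟨he, -⟩ | ⟨-, hl⟩
      · exact absurd (he ▸ List.mem_cons_self) hem
      · rw [hl, hx]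
    have hadj : G₁.Adj (a ∘ Fin.castSucc) (b ∘ Fin.castSucc) := by
      rcases glue_adj.mp h with ⟨hl, ⟨-, ha⟩ | ⟨h1', -⟩⟩ | ⟨-, -, hne⟩
      · exact ha
      · rw [hx] at h1'; exact absurd h1'.symm (Ne.symm zmod01)
      · rw [hx, hb] at hne; exact absurd rfl hne
    obtain ⟨q', hs, he', hall⟩ := ih (fun hm => hem (List.mem_cons_of_mem _ hm)) hb
    refine ⟨SimpleGraph.Walk.cons hadj q', ?_, ?_, ?_⟩
    · rw [SimpleGraph.Walk.support_cons, SimpleGraph.Walk.support_cons, List.map_cons, hs]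
    · rw [SimpleGraph.Walk.edges_cons, SimpleGraph.Walk.edges_cons, List.map_cons, he',
        Sym2.map_pair_eq]
    · intro z hz
      rw [SimpleGraph.Walk.support_cons, List.mem_cons] at hz
      rcases hz with rfl | hz
      · exact hx
      · exact hall z hz

lemma proj_walk1 {x y : Fin (n+1) → ZMod 2} (pw : (glue n G₁ G₂ v₀).Walk x y)
    (hem : me n v₀ ∉ pw.edges) (hx : x (Fin.last n) = 1) :
    ∃ q : G₂.Walk (x ∘ Fin.castSucc) (y ∘ Fin.castSucc),
      q.support = pw.support.map (· ∘ Fin.castSucc) ∧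
      q.edges = pw.edges.map (Sym2.map (· ∘ Fin.castSucc)) ∧
      ∀ z ∈ pw.support, z (Fin.last n) = 1 := by
  induction pw with
  | nil =>
    exact ⟨SimpleGraph.Walk.nil, by simp, by simp, by simpa using hx⟩
  | @cons a b c h q ih =>
    have hb : b (Fin.last n) = 1 := by
      rcases step_case h with ⟨he, -⟩ | ⟨-, hl⟩
      · exact absurd (he ▸ List.mem_cons_self) hem
      · rw [hl, hx]
    have hadj : G₂.Adj (a ∘ Fin.castSucc) (b ∘ Fin.castSucc) := by
      rcases glue_adj.mp h with ⟨hl, ⟨h1', -⟩ | ⟨-, ha⟩⟩ | ⟨-, -, hne⟩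
      · rw [hx] at h1'; exact absurd h1' (Ne.symm zmod01)
      · exact ha
      · rw [hx, hb] at hne; exact absurd rfl hne
    obtain ⟨q', hs, he', hall⟩ := ih (fun hm => hem (List.mem_cons_of_mem _ hm)) hb
    refine ⟨SimpleGraph.Walk.cons hadj q', ?_, ?_, ?_⟩
    · rw [SimpleGraph.Walk.support_cons, SimpleGraph.Walk.support_cons, List.map_cons, hs]
    · rw [SimpleGraph.Walk.edges_cons, SimpleGraph.Walk.edges_cons, List.map_cons, he',
        Sym2.map_pair_eq]
    · intro z hz
      rw [SimpleGraph.Walk.support_cons, List.mem_cons] at hz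
      rcases hz with rfl | hz
      · exact hx
      · exact hall z hz

/-- Transporting a cycle along an injective-on-the-support projection. -/
lemma cycle_of_proj {V W : Type*} {G : SimpleGraph V} {H : SimpleGraph W}
    {v : V} {φ : V → W} (c : G.Walk v v) (hc : c.IsCycle)
    (q : H.Walk (φ v) (φ v))
    (hs : q.support = c.support.map φ)
    (he : q.edges = c.edges.map (Sym2.map φ))
    (hφ : ∀ a ∈ c.support, ∀ b ∈ c.support, φ a = φ b → a = b) :
    q.IsCycle := by
  refine ⟨⟨⟨?_⟩, ?_⟩, ?_⟩
  · -- edges nodup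
    rw [he]
    refine List.Nodup.map_on ?_ hc.isCircuit.isTrail.edges_nodup
    intro e₁ he₁ e₂ he₂ heq
    induction e₁ with
    | h a b =>
      induction e₂ with
      | h a' b' =>
        have ha : a ∈ c.support := c.fst_mem_support_of_mem_edges he₁
        have hb : b ∈ c.support := c.snd_mem_support_of_mem_edges he₁
        have ha' : a' ∈ c.support := c.fst_mem_support_of_mem_edges he₂
        have hb' : b' ∈ c.support := c.snd_mem_support_of_mem_edges he₂
        rw [Sym2.map_pair_eq, Sym2.map_pair_eq, Sym2.eq_iff] at heq
        rw [Sym2.eq_iff]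
        rcases heq with ⟨h1, h2⟩ | ⟨h1, h2⟩
        · exact Or.inl ⟨hφ _ ha _ ha' h1, hφ _ hb _ hb' h2⟩
        · exact Or.inr ⟨hφ _ ha _ hb' h1, hφ _ hb _ ha' h2⟩
  · -- q ≠ nil
    intro hq
    have h3 := hc.three_le_length
    have : q.length = c.length := by
      have := congrArg List.length he
      rwa [SimpleGraph.Walk.length_edges, List.length_map,
        SimpleGraph.Walk.length_edges] at this
    rw [hq] at this
    simp at this
    omega
  · -- support tail nodup
    have : q.support.tail = c.support.tail.map φ := by
      rw [hs, List.map_tail]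
    rw [this]
    refine List.Nodup.map_on ?_ hc.support_nodup
    intro a ha b hb
    exact hφ _ (List.mem_of_mem_tail ha) _ (List.mem_of_mem_tail hb)

lemma glue_acyclic (ha1 : G₁.IsAcyclic) (ha2 : G₂.IsAcyclic) :
    (glue n G₁ G₂ v₀).IsAcyclic := by
  classical
  intro v c hc
  by_cases hme : me n v₀ ∈ c.edges
  · have h1 := walk_parity c
    rw [List.count_eq_one_of_mem hc.isCircuit.isTrail.edges_nodup hme] at h1
    have : (1 : ZMod 2) = 0 := by
      have := h1
      rw [left_eq_add] at this
      simp at this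
    simp at this
  · have hproj : ∀ (z₁ : Fin (n+1) → ZMod 2) (c' : ZMod 2), z₁ ∈ c.support →
        (∀ z ∈ c.support, z (Fin.last n) = c') → True := fun _ _ _ _ => trivial
    rcases zmod2_cases (v (Fin.last n)) with h0 | h0
    · obtain ⟨q, hs, he, hall⟩ := proj_walk0 c hme h0
      refine ha1 q (cycle_of_proj (φ := (· ∘ Fin.castSucc)) c hc q hs he ?_)
      intro a ha b hb hab
      have hab' : a ∘ Fin.castSucc = b ∘ Fin.castSucc := hab
      have : (Fin.snoc (a ∘ Fin.castSucc) 0 : Fin (n+1) → ZMod 2)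
          = Fin.snoc (b ∘ Fin.castSucc) 0 := by rw [hab']
      rw [← hall a ha] at this
      conv_lhs at this => rw [snoc_reconstruct]
      rw [hall a ha, ← hall b hb] at this
      rwa [snoc_reconstruct] at this
    · obtain ⟨q, hs, he, hall⟩ := proj_walk1 c hme h0
      refine ha2 q (cycle_of_proj (φ := (· ∘ Fin.castSucc)) c hc q hs he ?_)
      intro a ha b hb hab
      have hab' : a ∘ Fin.castSucc = b ∘ Fin.castSucc := hab
      have : (Fin.snoc (a ∘ Fin.castSucc) 1 : Fin (n+1) → ZMod 2)
          = Fin.snoc (b ∘ Fin.castSucc) 1 := by rw [hab']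
      rw [← hall a ha] at this
      conv_lhs at this => rw [snoc_reconstruct]
      rw [hall a ha, ← hall b hb] at this
      rwa [snoc_reconstruct] at this

lemma glue_isTree (ht₁ : G₁.IsTree) (ht₂ : G₂.IsTree) : (glue n G₁ G₂ v₀).IsTree :=
  ⟨glue_connected ht₁.isConnected ht₂.isConnected,
   glue_acyclic ht₁.IsAcyclic ht₂.IsAcyclic⟩

end Tree
section MQ
variable {n : ℕ} {v₀ : Fin n → ZMod 2}

/-- All vertices other than `v₀`, listed in nondecreasing distance from `v₀`. -/
noncomputable def MQ (n : ℕ) (v₀ : Fin n → ZMod 2) : List (Fin n → ZMod 2) :=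
  ((Finset.univ.filter (fun u => u ≠ v₀)).toList).mergeSort
    (fun u w => decide (hammingDist u v₀ ≤ hammingDist w v₀))

lemma MQ_nodup : (MQ n v₀).Nodup :=
  ((List.mergeSort_perm _ _).nodup_iff).2 (Finset.nodup_toList _)

lemma mem_MQ {u : Fin n → ZMod 2} : u ∈ MQ n v₀ ↔ u ≠ v₀ := by
  simp [MQ, List.mem_mergeSort, Finset.mem_toList]

lemma MQ_sorted :
    (MQ n v₀).Pairwise (fun u w => hammingDist u v₀ ≤ hammingDist w v₀) := by
  have h := List.pairwise_mergeSort
    (le := fun u w : Fin n → ZMod 2 => decide (hammingDist u v₀ ≤ hammingDist w v₀))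
    (fun a b c hab hbc => by simp only [decide_eq_true_eq] at *; omega)
    (fun a b => by simp only [Bool.or_eq_true, decide_eq_true_eq]; omega)
    ((Finset.univ.filter (fun u => u ≠ v₀)).toList)
  exact h.imp (fun hd => by simpa using hd)

lemma MQ_before {k : ℕ} (hk : k < (MQ n v₀).length) {w : Fin n → ZMod 2} (hw : w ≠ v₀)
    (hlt : hammingDist w v₀ < hammingDist ((MQ n v₀)[k]) v₀) : w ∈ (MQ n v₀).take k := by
  obtain ⟨j, hj, hjw⟩ := List.mem_iff_getElem.1 (mem_MQ.2 hw)
  have hjk : j < k := by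
    by_contra hge
    push_neg at hge
    rcases eq_or_lt_of_le hge with he | hlt2
    · subst he
      rw [hjw] at hlt; omega
    · have := (List.pairwise_iff_getElem.1 MQ_sorted) k j hk hj hlt2
      rw [hjw] at this; omega
  rw [List.mem_take_iff_getElem]
  exact ⟨j, by omega, hjw⟩

lemma nodup_getElem_not_mem_take {α : Type*} {l : List α} (h : l.Nodup) {k : ℕ}
    (hk : k < l.length) : l[k] ∉ l.take k := by
  intro hmem
  rw [List.mem_take_iff_getElem] at hmem
  obtain ⟨j, hj, hje⟩ := hmem
  have hj' : j < min k l.length := by simpa using hj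
  have : (⟨j, by omega⟩ : Fin l.length) = ⟨k, hk⟩ :=
    (List.Nodup.get_inj_iff h).1 (by simpa [List.get_eq_getElem] using hje)
  simp at this
  omega

lemma exists_nbr {u : Fin n → ZMod 2} (hu : u ≠ v₀) :
    ∃ w, (Qc n).Adj u w ∧ hammingDist w v₀ < hammingDist u v₀ := by
  classical
  obtain ⟨j, hj⟩ := Function.ne_iff.1 hu
  refine ⟨Function.update u j (v₀ j), ?_, ?_⟩
  · rw [Qc_adj]
    have hset : Finset.univ.filter (fun i => u i ≠ Function.update u j (v₀ j) i)
        = {j} := by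
      ext i
      simp only [Finset.mem_filter, Finset.mem_univ, true_and, Finset.mem_singleton]
      by_cases hij : i = j
      · subst hij
        simp only [Function.update_self]
        simpa using hj
      · simp [Function.update_of_ne hij, hij]
    rw [hammingDist, hset, Finset.card_singleton]
  · have hset : Finset.univ.filter (fun i => Function.update u j (v₀ j) i ≠ v₀ i)
        = (Finset.univ.filter (fun i => u i ≠ v₀ i)).erase j := by
      ext i
      simp only [Finset.mem_filter, Finset.mem_univ, true_and, Finset.mem_erase]
      by_cases hij : i = j
      · subst hij
        simp [Function.update_self]
      · simp [Function.update_of_ne hij, hij]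
    have hjmem : j ∈ Finset.univ.filter (fun i => u i ≠ v₀ i) := by
      simp only [Finset.mem_filter, Finset.mem_univ, true_and]; exact hj
    have hpos : 0 < (Finset.univ.filter (fun i => u i ≠ v₀ i)).card :=
      Finset.card_pos.2 ⟨j, hjmem⟩
    rw [hammingDist, hammingDist, hset, Finset.card_erase_of_mem hjmem]
    omega

lemma cover_le {G : SimpleGraph (Fin n → ZMod 2)} {Ls : Set (Sym2 (Fin n → ZMod 2))}
    (h : (Qc n).edgeSet ⊆ G.edgeSet ∪ Ls) : Qc n ≤ G ⊔ SimpleGraph.fromEdgeSet Ls := by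
  intro a b hab
  rcases h ((SimpleGraph.mem_edgeSet (G := Qc n)).2 hab) with hG | hL
  · exact Or.inl ((SimpleGraph.mem_edgeSet (G := G)).1 hG)
  · exact Or.inr ((SimpleGraph.fromEdgeSet_adj Ls).2 ⟨hL, hab.ne⟩)

end MQ
section EdgeMem
variable {n : ℕ} {G₁ G₂ : SimpleGraph (Fin n → ZMod 2)} {v₀ : Fin n → ZMod 2}

lemma m0_mem_edge {e : Sym2 (Fin n → ZMod 2)} (he : e ∈ (Qc n).edgeSet) :
    m0 n e ∈ (Qc (n+1)).edgeSet := by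
  induction e with
  | h a b =>
    rw [m0_mk, SimpleGraph.mem_edgeSet, Qc_adj, hd_snoc]
    rw [SimpleGraph.mem_edgeSet] at he
    rw [Qc_adj.mp he]
    simp

lemma m1_mem_edge {e : Sym2 (Fin n → ZMod 2)} (he : e ∈ (Qc n).edgeSet) :
    m1 n e ∈ (Qc (n+1)).edgeSet := by
  induction e with
  | h a b =>
    rw [m1_mk, SimpleGraph.mem_edgeSet, Qc_adj, hd_snoc]
    rw [SimpleGraph.mem_edgeSet] at he
    rw [Qc_adj.mp he]
    simp

lemma me_mem_edge (u : Fin n → ZMod 2) : me n u ∈ (Qc (n+1)).edgeSet := by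
  rw [me, SimpleGraph.mem_edgeSet, Qc_adj, hd_snoc, hammingDist_self]
  simp [zmod01]

lemma m0_not_glue {e : Sym2 (Fin n → ZMod 2)} (hne : e ∉ G₁.edgeSet) :
    m0 n e ∉ (glue n G₁ G₂ v₀).edgeSet := by
  induction e with
  | h a b =>
    rw [m0_mk, SimpleGraph.mem_edgeSet]
    intro h
    exact hne ((SimpleGraph.mem_edgeSet (G := G₁)).2 (glue_adj_00.mp h))

lemma m1_not_glue {e : Sym2 (Fin n → ZMod 2)} (hne : e ∉ G₂.edgeSet) :
    m1 n e ∉ (glue n G₁ G₂ v₀).edgeSet := by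
  induction e with
  | h a b =>
    rw [m1_mk, SimpleGraph.mem_edgeSet]
    intro h
    exact hne ((SimpleGraph.mem_edgeSet (G := G₂)).2 (glue_adj_11.mp h))

lemma me_not_glue {u : Fin n → ZMod 2} (hu : u ≠ v₀) :
    me n u ∉ (glue n G₁ G₂ v₀).edgeSet := by
  rw [me, SimpleGraph.mem_edgeSet]
  intro h
  exact hu (glue_adj_01.mp h).1

lemma all0_of_mem_map_m0 {l : List (Sym2 (Fin n → ZMod 2))} {E : Sym2 (Fin (n+1) → ZMod 2)}
    (hE : E ∈ l.map (m0 n)) : ∀ x ∈ E, x (Fin.last n) = 0 := by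
  intro x hx
  obtain ⟨e, he, rfl⟩ := List.mem_map.1 hE
  exact mem_m0_last (S := {e' | e' ∈ l}) ⟨e, he, rfl⟩ hx

lemma all1_of_mem_map_m1 {l : List (Sym2 (Fin n → ZMod 2))} {E : Sym2 (Fin (n+1) → ZMod 2)}
    (hE : E ∈ l.map (m1 n)) : ∀ x ∈ E, x (Fin.last n) = 1 := by
  intro x hx
  obtain ⟨e, he, rfl⟩ := List.mem_map.1 hE
  exact mem_m1_last (S := {e' | e' ∈ l}) ⟨e, he, rfl⟩ hx

lemma not_m0_m1 {la lb : List (Sym2 (Fin n → ZMod 2))} {E : Sym2 (Fin (n+1) → ZMod 2)}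
    (h0 : E ∈ la.map (m0 n)) (h1 : E ∈ lb.map (m1 n)) : False := by
  obtain ⟨e, he, rfl⟩ := List.mem_map.1 h0
  induction e with
  | h a b =>
    have := all1_of_mem_map_m1 h1 (Fin.snoc a 0) (by rw [m0_mk]; exact Sym2.mem_mk_left _ _)
    rw [Fin.snoc_last] at this
    exact zmod01 this

lemma not_m0_me {la : List (Sym2 (Fin n → ZMod 2))} {lu : List (Fin n → ZMod 2)}
    {E : Sym2 (Fin (n+1) → ZMod 2)}
    (h0 : E ∈ la.map (m0 n)) (h1 : E ∈ lu.map (me n)) : False := by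
  obtain ⟨u, hu, rfl⟩ := List.mem_map.1 h1
  have := all0_of_mem_map_m0 h0 (Fin.snoc u 1) (by rw [me]; exact Sym2.mem_mk_right _ _)
  rw [Fin.snoc_last] at this
  exact zmod01 this.symm

lemma not_m1_me {la : List (Sym2 (Fin n → ZMod 2))} {lu : List (Fin n → ZMod 2)}
    {E : Sym2 (Fin (n+1) → ZMod 2)}
    (h0 : E ∈ la.map (m1 n)) (h1 : E ∈ lu.map (me n)) : False := by
  obtain ⟨u, hu, rfl⟩ := List.mem_map.1 h1
  have := all1_of_mem_map_m1 h0 (Fin.snoc u 0) (by rw [me]; exact Sym2.mem_mk_left _ _)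
  rw [Fin.snoc_last] at this
  exact zmod01 this

end EdgeMem
lemma setSplit {n : ℕ} (la lb : List (Sym2 (Fin n → ZMod 2))) (lc : List (Fin n → ZMod 2)) :
    {e : Sym2 (Fin (n+1) → ZMod 2) | e ∈ la.map (m0 n) ++ (lb.map (m1 n) ++ lc.map (me n))}
      = m0 n '' {e | e ∈ la} ∪ m1 n '' {e | e ∈ lb} ∪ me n '' {w | w ∈ lc} := by
  ext E
  simp only [Set.mem_setOf_eq, List.mem_append, List.mem_map, Set.mem_union, Set.mem_image,
    Set.mem_setOf_eq]
  constructor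
  · rintro (⟨a, ha, rfl⟩ | ⟨a, ha, rfl⟩ | ⟨a, ha, rfl⟩)
    · exact Or.inl (Or.inl ⟨a, ha, rfl⟩)
    · exact Or.inl (Or.inr ⟨a, ha, rfl⟩)
    · exact Or.inr ⟨a, ha, rfl⟩
  · rintro ((⟨a, ha, rfl⟩ | ⟨a, ha, rfl⟩) | ⟨a, ha, rfl⟩)
    · exact Or.inl ⟨a, ha, rfl⟩
    · exact Or.inr (Or.inl ⟨a, ha, rfl⟩)
    · exact Or.inr (Or.inr ⟨a, ha, rfl⟩)

/-- If `G₁` and `G₂` are weakly `(Q_n, Q_2)`-saturated spanning trees of `Q_n`, then placing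
them in the two complementary copies of `Q_n` inside `Q_{n+1}` and adding one edge between a
pair of corresponding vertices yields a weakly `(Q_{n+1}, Q_2)`-saturated spanning tree. -/
theorem stmt_9 (n : ℕ) (G₁ G₂ : SimpleGraph (Fin n → ZMod 2)) (v₀ : Fin n → ZMod 2)
    (h₁ : WeaklySaturated n 2 G₁) (ht₁ : G₁.IsTree)
    (h₂ : WeaklySaturated n 2 G₂) (ht₂ : G₂.IsTree) :
    WeaklySaturated (n + 1) 2 (glue n G₁ G₂ v₀) ∧ (glue n G₁ G₂ v₀).IsTree := by
  classical
  obtain ⟨hle₁, l₁, hnd₁, hmem₁, hcov₁, hnew₁⟩ := h₁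
  obtain ⟨hle₂, l₂, hnd₂, hmem₂, hcov₂, hnew₂⟩ := h₂
  refine ⟨⟨glue_le hle₁ hle₂, ?_⟩, glue_isTree ht₁ ht₂⟩
  set L : List (Sym2 (Fin (n+1) → ZMod 2)) :=
    l₁.map (m0 n) ++ (l₂.map (m1 n) ++ (MQ n v₀).map (me n)) with hL
  have hLlen : L.length = l₁.length + (l₂.length + (MQ n v₀).length) := by
    simp [hL]
  refine ⟨L, ?_, ?_, ?_, ?_⟩
  · -- Nodup
    rw [hL, List.nodup_append, List.nodup_append]
    refine ⟨hnd₁.map m0_inj, ⟨hnd₂.map m1_inj, MQ_nodup.map me_inj, ?_⟩, ?_⟩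
    · intro E h1 F h2 hEF
      subst hEF
      exact not_m1_me h1 h2
    · intro E h1 F h2 hEF
      subst hEF
      rcases List.mem_append.1 h2 with h2 | h2
      · exact not_m0_m1 h1 h2
      · exact not_m0_me h1 h2
  · -- all edges of L are new cube edges
    intro e he
    rw [hL] at he
    rcases List.mem_append.1 he with h | h
    · obtain ⟨e₁, he₁, rfl⟩ := List.mem_map.1 h
      obtain ⟨hQ, hG⟩ := hmem₁ e₁ he₁
      exact ⟨m0_mem_edge hQ, m0_not_glue hG⟩
    rcases List.mem_append.1 h with h | h
    · obtain ⟨e₂, he₂, rfl⟩ := List.mem_map.1 h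
      obtain ⟨hQ, hG⟩ := hmem₂ e₂ he₂
      exact ⟨m1_mem_edge hQ, m1_not_glue hG⟩
    · obtain ⟨u, hu, rfl⟩ := List.mem_map.1 h
      exact ⟨me_mem_edge u, me_not_glue (mem_MQ.1 hu)⟩
  · -- coverage
    intro E hE
    induction E with
    | h x y =>
      have hd1 : hammingDist x y = 1 := Qc_adj.mp ((SimpleGraph.mem_edgeSet _).1 hE)
      by_cases hl : x (Fin.last n) = y (Fin.last n)
      · have h1 : hammingDist (x ∘ Fin.castSucc) (y ∘ Fin.castSucc) = 1 := by
          rw [hd_split, if_pos hl] at hd1; omega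
        have hQ : s(x ∘ Fin.castSucc, y ∘ Fin.castSucc) ∈ (Qc n).edgeSet :=
          (SimpleGraph.mem_edgeSet _).2 (Qc_adj.mpr h1)
        rcases zmod2_cases (x (Fin.last n)) with h0 | h0
        · have hx : x = Fin.snoc (x ∘ Fin.castSucc) 0 := by
            rw [← h0]; exact (snoc_reconstruct x).symm
          have hy : y = Fin.snoc (y ∘ Fin.castSucc) 0 := by
            rw [← h0, hl]; exact (snoc_reconstruct y).symm
          rcases hcov₁ hQ with hG | hl₁
          · left
            rw [SimpleGraph.mem_edgeSet, hx, hy]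
            exact glue_adj_00.mpr ((SimpleGraph.mem_edgeSet _).1 hG)
          · right
            have : s(x, y) = m0 n s(x ∘ Fin.castSucc, y ∘ Fin.castSucc) := by
              rw [m0_mk, ← hx, ← hy]
            rw [hL]
            show _ ∈ _
            rw [this]
            exact List.mem_append.2 (Or.inl (List.mem_map.2 ⟨_, hl₁, rfl⟩))
        · have hx : x = Fin.snoc (x ∘ Fin.castSucc) 1 := by
            rw [← h0]; exact (snoc_reconstruct x).symm
          have hy : y = Fin.snoc (y ∘ Fin.castSucc) 1 := by
            rw [← h0, hl]; exact (snoc_reconstruct y).symm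
          rcases hcov₂ hQ with hG | hl₂
          · left
            rw [SimpleGraph.mem_edgeSet, hx, hy]
            exact glue_adj_11.mpr ((SimpleGraph.mem_edgeSet _).1 hG)
          · right
            have : s(x, y) = m1 n s(x ∘ Fin.castSucc, y ∘ Fin.castSucc) := by
              rw [m1_mk, ← hx, ← hy]
            rw [hL]
            show _ ∈ _
            rw [this]
            exact List.mem_append.2 (Or.inr (List.mem_append.2 (Or.inl
              (List.mem_map.2 ⟨_, hl₂, rfl⟩))))
      · have h0' : hammingDist (x ∘ Fin.castSucc) (y ∘ Fin.castSucc) = 0 := by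
          rw [hd_split, if_neg hl] at hd1; omega
        have hxy : x ∘ Fin.castSucc = y ∘ Fin.castSucc := hammingDist_eq_zero.1 h0'
        by_cases huv : x ∘ Fin.castSucc = v₀
        · left
          rw [SimpleGraph.mem_edgeSet, glue_adj]
          exact Or.inr ⟨huv, hxy ▸ huv, hl⟩
        · right
          have hMQ : x ∘ Fin.castSucc ∈ MQ n v₀ := mem_MQ.2 huv
          have hme : s(x, y) = me n (x ∘ Fin.castSucc) := by
            rw [me]
            rcases zmod2_cases (x (Fin.last n)) with h0 | h0
            · have h0y : y (Fin.last n) = 1 := by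
                rcases zmod2_cases (y (Fin.last n)) with h' | h'
                · exact absurd (h0.trans h'.symm) hl
                · exact h'
              have hx : x = Fin.snoc (x ∘ Fin.castSucc) 0 := by
                rw [← h0]; exact (snoc_reconstruct x).symm
              have hy : y = Fin.snoc (x ∘ Fin.castSucc) 1 := by
                rw [← h0y, hxy]; exact (snoc_reconstruct y).symm
              rw [← hx, ← hy]
            · have h0y : y (Fin.last n) = 0 := by
                rcases zmod2_cases (y (Fin.last n)) with h' | h'
                · exact h'
                · exact absurd (h0.trans h'.symm) hl
              have hx : x = Fin.snoc (x ∘ Fin.castSucc) 1 := by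
                rw [← h0]; exact (snoc_reconstruct x).symm
              have hy : y = Fin.snoc (x ∘ Fin.castSucc) 0 := by
                rw [← h0y, hxy]; exact (snoc_reconstruct y).symm
              rw [← hx, ← hy]
              exact Sym2.eq_swap.symm
          rw [hL]
          show _ ∈ _
          rw [hme]
          exact List.mem_append.2 (Or.inr (List.mem_append.2 (Or.inr
            (List.mem_map.2 ⟨_, hMQ, rfl⟩))))
  · -- the saturation sequence
    rintro ⟨i, hi⟩
    by_cases c1 : i < l₁.length
    · have hget : L.get ⟨i, hi⟩ = m0 n (l₁[i]'c1) := by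
        simp only [hL, List.get_eq_getElem]
        rw [List.getElem_append_left (by simpa using c1)]
        simp
      have htake : L.take i = (l₁.take i).map (m0 n) := by
        rw [hL, List.take_append_of_le_length (by simp; omega), List.map_take]
      rw [hget, htake]
      have hset := setSplit (l₁.take i) ([] : List (Sym2 (Fin n → ZMod 2)))
        ([] : List (Fin n → ZMod 2))
      simp only [List.map_nil, List.append_nil] at hset
      rw [hset]
      exact newCube0 (hnew₁ ⟨i, c1⟩)
    by_cases c2 : i < l₁.length + l₂.length
    · have hA : l₁.length ≤ i := not_lt.1 c1
      have hget : L.get ⟨i, hi⟩ = m1 n (l₂[i - l₁.length]'(by omega)) := by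
        simp only [hL, List.get_eq_getElem]
        rw [List.getElem_append_right (by simpa using hA)]
        rw [List.getElem_append_left (by simp; omega)]
        simp
      have htake : L.take i = l₁.map (m0 n) ++ ((l₂.take (i - l₁.length)).map (m1 n)) := by
        rw [hL, List.take_append,
          List.take_of_length_le (by simpa using hA),
          List.take_append_of_le_length (by simp; omega), List.map_take]
        simp
      rw [hget, htake]
      have hset := setSplit l₁ (l₂.take (i - l₁.length)) ([] : List (Fin n → ZMod 2))
      simp only [List.map_nil, List.append_nil] at hset
      rw [hset]
      exact newCube1 (hnew₂ ⟨i - l₁.length, by omega⟩)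
    · have hA : l₁.length ≤ i := not_lt.1 c1
      have hAB : l₁.length + l₂.length ≤ i := not_lt.1 c2
      have hk : i - (l₁.length + l₂.length) < (MQ n v₀).length := by omega
      have hget : L.get ⟨i, hi⟩ = me n ((MQ n v₀)[i - (l₁.length + l₂.length)]'hk) := by
        simp only [hL, List.get_eq_getElem]
        rw [List.getElem_append_right (by simpa using hA)]
        rw [List.getElem_append_right (by simp; omega)]
        have hidx : i - l₁.length - l₂.length = i - (l₁.length + l₂.length) := by omega
        simp only [List.getElem_map, List.length_map, hidx]
      have htake : L.take i = l₁.map (m0 n) ++ (l₂.map (m1 n)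
          ++ ((MQ n v₀).take (i - (l₁.length + l₂.length))).map (me n)) := by
        rw [hL, List.take_append,
          List.take_of_length_le (by simpa using hA),
          List.take_append,
          List.take_of_length_le (by simp; omega), List.map_take]
        have hidx : i - l₁.length - l₂.length = i - (l₁.length + l₂.length) := by omega
        simp only [List.length_map, hidx]
      rw [hget, htake]
      have hset := setSplit l₁ l₂ ((MQ n v₀).take (i - (l₁.length + l₂.length)))
      rw [hset]
      have humem : (MQ n v₀)[i - (l₁.length + l₂.length)]'hk ∈ MQ n v₀ :=
        List.getElem_mem _
      have huv : (MQ n v₀)[i - (l₁.length + l₂.length)]'hk ≠ v₀ := mem_MQ.1 humem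
      obtain ⟨w, hadj_uw, hwlt⟩ := exists_nbr huv
      refine newCubeMatch (cover_le hcov₁) (cover_le hcov₂) hadj_uw ?_ huv ?_
      · by_cases hwv : w = v₀
        · exact Or.inl ⟨hwv, hwv⟩
        · exact Or.inr ⟨rfl, MQ_before hk hwv hwlt⟩
      · exact nodup_getElem_not_mem_take MQ_nodup hk
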